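/- Switching invariance: let ℙ be the uniform measure on d-regular graphs on N vertices and let i,j,k,ℓ,m be distinct indices not in a given index set (all distinct). Then for any function F of the adjacency matrix, 𝔼[χᵢₖ^{mℓ}(A)·F(A)] = 𝔼[χᵢₘ^{kℓ}(A)·F(A + ξᵢₖ^{mℓ})], where χᵢⱼᵏˡ(A) = AᵢⱼA_{kℓ}(1-Aᵢₖ)(1-Aⱼₗ) and ξ is the switching matrix. -/

import Mathlib

open Finset

noncomputable def toMat (N : ℕ) (B : Fin N → Fin N → Bool) : Matrix (Fin N) (Fin N) ℝ :=
  Matrix.of fun i j => if B i j then 1 else 0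

/-- The set of entry positions toggled by the switching. -/
def swP {N : ℕ} (i k l m x y : Fin N) : Prop :=
  (i = x ∧ k = y) ∨ (k = x ∧ i = y) ∨ (m = x ∧ l = y) ∨ (l = x ∧ m = y) ∨
  (i = x ∧ m = y) ∨ (m = x ∧ i = y) ∨ (k = x ∧ l = y) ∨ (l = x ∧ k = y)

instance {N : ℕ} (i k l m x y : Fin N) : Decidable (swP i k l m x y) := by
  unfold swP; infer_instance

/-- The switching map on Boolean adjacency arrays. -/
def sw {N : ℕ} (i k l m : Fin N) (B : Fin N → Fin N → Bool) : Fin N → Fin N → Bool :=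
  fun x y => if swP i k l m x y then !B x y else B x y

lemma swP_swap {N : ℕ} {i k l m x y : Fin N} (h : swP i k l m x y) : swP i k l m y x := by
  unfold swP at h ⊢
  rcases h with h | h | h | h | h | h | h | h
  · exact Or.inr (Or.inl ⟨h.2, h.1⟩)
  · exact Or.inl ⟨h.2, h.1⟩
  · exact Or.inr (Or.inr (Or.inr (Or.inl ⟨h.2, h.1⟩)))
  · exact Or.inr (Or.inr (Or.inl ⟨h.2, h.1⟩))
  · exact Or.inr (Or.inr (Or.inr (Or.inr (Or.inr (Or.inl ⟨h.2, h.1⟩)))))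
  · exact Or.inr (Or.inr (Or.inr (Or.inr (Or.inl ⟨h.2, h.1⟩))))
  · exact Or.inr (Or.inr (Or.inr (Or.inr (Or.inr (Or.inr (Or.inr ⟨h.2, h.1⟩))))))
  · exact Or.inr (Or.inr (Or.inr (Or.inr (Or.inr (Or.inr (Or.inl ⟨h.2, h.1⟩))))))

lemma sw_sw {N : ℕ} (i k l m : Fin N) (B : Fin N → Fin N → Bool) :
    sw i k l m (sw i k l m B) = B := by
  funext x y
  unfold sw
  by_cases h : swP i k l m x y <;> simp [h]

lemma sw_symm {N : ℕ} {i k l m : Fin N} {B : Fin N → Fin N → Bool}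
    (hsb : ∀ x y, B x y = B y x) (x y : Fin N) :
    sw i k l m B x y = sw i k l m B y x := by
  unfold sw
  by_cases h : swP i k l m x y
  · rw [if_pos h, if_pos (swP_swap h), hsb]
  · rw [if_neg h, if_neg (fun h' => h (swP_swap h')), hsb]

/-- The switching matrix ξ, written out entrywise. -/
noncomputable def xiM (N : ℕ) (i k l m : Fin N) : Matrix (Fin N) (Fin N) ℝ :=
  Matrix.of fun x y =>
    ((if i = x ∧ k = y then (1:ℝ) else 0) + (if k = x ∧ i = y then (1:ℝ) else 0)) +
    ((if m = x ∧ l = y then (1:ℝ) else 0) + (if l = x ∧ m = y then (1:ℝ) else 0)) -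
    ((if i = x ∧ m = y then (1:ℝ) else 0) + (if m = x ∧ i = y then (1:ℝ) else 0)) -
    ((if k = x ∧ l = y then (1:ℝ) else 0) + (if l = x ∧ k = y then (1:ℝ) else 0))

lemma xiM_row (N : ℕ) (i k l m : Fin N) (x : Fin N) : ∑ y, xiM N i k l m x y = 0 := by
  have hsum : ∀ a b : Fin N, ∑ y, (if a = x ∧ b = y then (1:ℝ) else 0)
      = if a = x then 1 else 0 := by
    intro a b
    by_cases h : a = x <;> simp [h]
  simp only [xiM, Matrix.of_apply]
  simp only [Finset.sum_sub_distrib, Finset.sum_add_distrib]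
  rw [hsum i k, hsum k i, hsum m l, hsum l m, hsum i m, hsum m i, hsum k l, hsum l k]
  ring

lemma xiM_symm (N : ℕ) (i k l m : Fin N) (x y : Fin N) :
    xiM N i k l m x y = xiM N i k l m y x := by
  simp only [xiM, Matrix.of_apply]
  have e : ∀ a b : Fin N, (if a = x ∧ b = y then (1:ℝ) else 0)
      = (if b = y ∧ a = x then (1:ℝ) else 0) := by
    intro a b; by_cases h1 : a = x <;> by_cases h2 : b = y <;> simp [h1, h2]
  rw [e i k, e k i, e m l, e l m, e i m, e m i, e k l, e l k]
  ring

/-- The key pointwise identity for the switching map. -/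
lemma sw_mat {N : ℕ} {i k l m : Fin N}
    (hik : i ≠ k) (hil : i ≠ l) (him : i ≠ m) (hkl : k ≠ l) (hkm : k ≠ m) (hlm : l ≠ m)
    {B : Fin N → Fin N → Bool} (hsb : ∀ x y, B x y = B y x) (ε : Bool)
    (h1 : B i m = ε) (h2 : B k l = ε) (h3 : B i k = !ε) (h4 : B m l = !ε) :
    toMat N (sw i k l m B) = toMat N B + (if ε then xiM N i k l m else -xiM N i k l m) := by
  have hki := hik.symm; have hli := hil.symm; have hmi := him.symm
  have hlk := hkl.symm; have hmk := hkm.symm; have hml := hlm.symm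
  have h1' : B m i = ε := (hsb m i).trans h1
  have h2' : B l k = ε := (hsb l k).trans h2
  have h3' : B k i = !ε := (hsb k i).trans h3
  have h4' : B l m = !ε := (hsb l m).trans h4
  ext x y
  by_cases hp : swP i k l m x y
  · have hσe : sw i k l m B x y = !B x y := if_pos hp
    rcases ε with _ | _ <;>
    · simp -failIfUnchanged only [Bool.ite_eq_true_distrib, if_true, if_false] at *
      unfold swP at hp
      rcases hp with ⟨rfl, rfl⟩ | ⟨rfl, rfl⟩ | ⟨rfl, rfl⟩ | ⟨rfl, rfl⟩ | ⟨rfl, rfl⟩ |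
          ⟨rfl, rfl⟩ | ⟨rfl, rfl⟩ | ⟨rfl, rfl⟩ <;>
        simp_all [toMat, xiM, Matrix.add_apply, Matrix.neg_apply,
          hik, hki, him, hmi, hil, hli, hkl, hlk, hkm, hmk, hlm, hml]
  · have hσe : sw i k l m B x y = B x y := if_neg hp
    unfold swP at hp
    simp only [not_or] at hp
    obtain ⟨n1, n2, n3, n4, n5, n6, n7, n8⟩ := hp
    have hx : xiM N i k l m x y = 0 := by
      simp only [xiM, Matrix.of_apply]
      rw [if_neg n1, if_neg n2, if_neg n3, if_neg n4, if_neg n5, if_neg n6, if_neg n7,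
        if_neg n8]
      ring
    rcases ε with _ | _ <;>
      simp [toMat, Matrix.add_apply, Matrix.neg_apply, hσe, hx]

set_option maxHeartbeats 1000000 in
open scoped Classical in
/-- switching invariance of the uniform measure on `d`-regular graphs:
`𝔼[χ_{ik}^{mℓ}(A) F(A)] = 𝔼[χ_{im}^{kℓ}(A) F(A + ξ_{ik}^{mℓ})]` for distinct indices. -/
theorem stmt_7 (N d : ℕ)
    (isReg : Matrix (Fin N) (Fin N) ℝ → Prop)
    (hisReg : ∀ A, isReg A ↔ ((∀ x y, A x y = A y x) ∧ (∀ x y, A x y = 0 ∨ A x y = 1) ∧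
      (∀ x, A x x = 0) ∧ ∀ x, ∑ y, A x y = d))
    (chi : Matrix (Fin N) (Fin N) ℝ → Fin N → Fin N → Fin N → Fin N → ℝ)
    (hchi : ∀ A a b c e, chi A a b c e = A a b * A c e * (1 - A a c) * (1 - A b e))
    (Δ : Fin N → Fin N → Matrix (Fin N) (Fin N) ℝ)
    (hΔ : ∀ a b, Δ a b = Matrix.of fun x y =>
      (if a = x ∧ b = y then (1 : ℝ) else 0) + (if b = x ∧ a = y then (1 : ℝ) else 0))
    (F : Matrix (Fin N) (Fin N) ℝ → ℝ)
    (i j k l m : Fin N)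
    (hdist : List.Pairwise (· ≠ ·) [i, j, k, l, m]) :
    ((Finset.univ.filter fun B : Fin N → Fin N → Bool => isReg (toMat N B)).card : ℝ)⁻¹ *
        ∑ B ∈ Finset.univ.filter (fun B : Fin N → Fin N → Bool => isReg (toMat N B)),
          chi (toMat N B) i k m l * F (toMat N B)
      = ((Finset.univ.filter fun B : Fin N → Fin N → Bool => isReg (toMat N B)).card : ℝ)⁻¹ *
        ∑ B ∈ Finset.univ.filter (fun B : Fin N → Fin N → Bool => isReg (toMat N B)),
          chi (toMat N B) i m k l *
            F (toMat N B + (Δ i k + Δ m l - Δ i m - Δ k l)) := by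
  simp only [List.pairwise_cons, List.mem_cons, List.not_mem_nil, List.mem_singleton,
    List.Pairwise.nil, forall_eq_or_imp, forall_eq, or_false] at hdist
  obtain ⟨⟨hij, hik, hil, him⟩, ⟨hjk, hjl, hjm⟩, ⟨hkl, hkm⟩, hlm, -⟩ := hdist
  -- ξ as an explicit matrix
  have hΔξ : Δ i k + Δ m l - Δ i m - Δ k l = xiM N i k l m := by
    ext x y
    simp only [Matrix.sub_apply, Matrix.add_apply, hΔ, Matrix.of_apply, xiM]
  rw [hΔξ]
  -- chi in terms of Bool entries
  have hchi' : ∀ (B : Fin N → Fin N → Bool) (a b c e : Fin N),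
      chi (toMat N B) a b c e = if B a b ∧ B c e ∧ ¬B a c ∧ ¬B b e then 1 else 0 := by
    intro B a b c e
    rw [hchi]
    simp only [toMat, Matrix.of_apply]
    by_cases h1 : B a b <;> by_cases h2 : B c e <;> by_cases h3 : B a c <;>
      by_cases h4 : B b e <;> simp [h1, h2, h3, h4]
  -- Bool-level symmetry from matrix symmetry
  have hsbool : ∀ B : Fin N → Fin N → Bool, isReg (toMat N B) → ∀ x y, B x y = B y x := by
    intro B hB x y
    have := ((hisReg _).1 hB).1 x y
    simp only [toMat, Matrix.of_apply] at this
    by_cases h1 : B x y <;> by_cases h2 : B y x <;> simp_all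
  -- regularity is preserved by the switching
  have hregs : ∀ (B : Fin N → Fin N → Bool) (ε : Bool), isReg (toMat N B) →
      B i m = ε → B k l = ε → B i k = !ε → B m l = !ε →
      isReg (toMat N (sw i k l m B)) := by
    intro B ε hB h1 h2 h3 h4
    have hsb := hsbool B hB
    have hm := sw_mat hik hil him hkl hkm hlm hsb ε h1 h2 h3 h4
    obtain ⟨-, -, hdg, hrs⟩ := (hisReg _).1 hB
    rw [hisReg]
    refine ⟨?_, ?_, ?_, ?_⟩
    · intro x y
      simp only [toMat, Matrix.of_apply, sw_symm hsb x y]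
    · intro x y
      by_cases h : sw i k l m B x y <;> simp [toMat, h]
    · intro x
      have hd : sw i k l m B x x = B x x := by
        refine if_neg ?_
        rintro (⟨rfl, rfl⟩ | ⟨rfl, rfl⟩ | ⟨rfl, rfl⟩ | ⟨rfl, rfl⟩ | ⟨rfl, rfl⟩ |
          ⟨rfl, rfl⟩ | ⟨rfl, rfl⟩ | ⟨rfl, rfl⟩) <;> simp_all
      have := hdg x
      simp only [toMat, Matrix.of_apply] at this ⊢
      rw [hd]; exact this
    · intro x
      rw [hm]
      have hsplit : ∑ y, (toMat N B + (if ε then xiM N i k l m else -xiM N i k l m)) x y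
          = (∑ y, toMat N B x y) + ∑ y, (if ε then xiM N i k l m else -xiM N i k l m) x y := by
        simp [Finset.sum_add_distrib]
      rw [hsplit, hrs x]
      rcases ε with _ | _ <;>
        simp [Matrix.neg_apply, Finset.sum_neg_distrib, xiM_row]
  -- rewrite both sums as sums over filtered sets
  set S := Finset.univ.filter fun B : Fin N → Fin N → Bool => isReg (toMat N B) with hS
  rw [Finset.sum_congr rfl (fun B (_ : B ∈ S) => by
    rw [hchi' B i k m l, ite_mul, one_mul, zero_mul]),
    ← Finset.sum_filter]
  rw [Finset.sum_congr rfl (fun B (_ : B ∈ S) => by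
    rw [hchi' B i m k l, ite_mul, one_mul, zero_mul]),
    ← Finset.sum_filter]
  congr 1
  -- the switching bijection between the two filtered sets
  refine Finset.sum_nbij' (sw i k l m) (sw i k l m) ?_ ?_ ?_ ?_ ?_
  · -- cond1 (ik, ml edges) maps to cond2 (im, kl edges)
    intro B hB
    simp only [Finset.mem_filter] at hB
    obtain ⟨hBS, h1, h2, h3, h4⟩ := hB
    simp only [hS, Finset.mem_filter, Finset.mem_univ, true_and] at hBS
    have hR : isReg (toMat N (sw i k l m B)) :=
      hregs B false hBS (Bool.eq_false_iff.mpr h3) (Bool.eq_false_iff.mpr h4)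
        (by simpa using h1) (by simpa using h2)
    have e1 : sw i k l m B i m = !B i m :=
      if_pos (Or.inr (Or.inr (Or.inr (Or.inr (Or.inl ⟨rfl, rfl⟩)))))
    have e2 : sw i k l m B k l = !B k l :=
      if_pos (Or.inr (Or.inr (Or.inr (Or.inr (Or.inr (Or.inr (Or.inl ⟨rfl, rfl⟩)))))))
    have e3 : sw i k l m B i k = !B i k := if_pos (Or.inl ⟨rfl, rfl⟩)
    have e4 : sw i k l m B m l = !B m l := if_pos (Or.inr (Or.inr (Or.inl ⟨rfl, rfl⟩)))
    simp only [Finset.mem_filter, hS, Finset.mem_univ, true_and]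
    refine ⟨hR, ?_, ?_, ?_, ?_⟩
    · rw [e1, Bool.eq_false_iff.mpr h3]; rfl
    · rw [e2, Bool.eq_false_iff.mpr h4]; rfl
    · rw [e3, h1]; simp
    · rw [e4, h2]; simp
  · -- cond2 maps to cond1
    intro B hB
    simp only [Finset.mem_filter] at hB
    obtain ⟨hBS, h1, h2, h3, h4⟩ := hB
    simp only [hS, Finset.mem_filter, Finset.mem_univ, true_and] at hBS
    have hR : isReg (toMat N (sw i k l m B)) :=
      hregs B true hBS h1 h2 (by simpa using Bool.eq_false_iff.mpr h3)
        (by simpa using Bool.eq_false_iff.mpr h4)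
    have e1 : sw i k l m B i m = !B i m :=
      if_pos (Or.inr (Or.inr (Or.inr (Or.inr (Or.inl ⟨rfl, rfl⟩)))))
    have e2 : sw i k l m B k l = !B k l :=
      if_pos (Or.inr (Or.inr (Or.inr (Or.inr (Or.inr (Or.inr (Or.inl ⟨rfl, rfl⟩)))))))
    have e3 : sw i k l m B i k = !B i k := if_pos (Or.inl ⟨rfl, rfl⟩)
    have e4 : sw i k l m B m l = !B m l := if_pos (Or.inr (Or.inr (Or.inl ⟨rfl, rfl⟩)))
    simp only [Finset.mem_filter, hS, Finset.mem_univ, true_and]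
    refine ⟨hR, ?_, ?_, ?_, ?_⟩
    · rw [e3, Bool.eq_false_iff.mpr h3]; rfl
    · rw [e4, Bool.eq_false_iff.mpr h4]; rfl
    · rw [e1, h1]; simp
    · rw [e2, h2]; simp
  · intro B _; exact sw_sw i k l m B
  · intro B _; exact sw_sw i k l m B
  · -- the summand values agree
    intro B hB
    simp only [Finset.mem_filter] at hB
    obtain ⟨hBS, h1, h2, h3, h4⟩ := hB
    simp only [hS, Finset.mem_filter, Finset.mem_univ, true_and] at hBS
    have hsb := hsbool B hBS
    have hm := sw_mat hik hil him hkl hkm hlm hsb false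
      (Bool.eq_false_iff.mpr h3) (Bool.eq_false_iff.mpr h4) (by simpa using h1)
      (by simpa using h2)
    simp only [if_neg (by simp : ¬(false = true))] at hm
    congr 1
    rw [hm]
    abel
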